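/- Let D = (G, O, w) be a weighted oriented graph with directed edges (z,y), (y,x) ∈ E(D) such that y ∈ V⁺ and N_D(x) = {y, x₁, …, x_s}. If there exist vertices z_i ∈ N_D(x_i) ∖ N_D⁺(y) for i = 1, …, s such that {z, x, z₁, …, z_s} is a stable set of G, then I(D) is not unmixed. -/

import Mathlib

/-! ## Weighted oriented graphs -/

/-- A weighted oriented graph `D = (G, 𝒪, w)`: an orientation of a finite simple
graph together with a weight function, where sources have weight `1`. -/
structure WOGraph (V : Type) where
  /-- the set of directed edges -/
  E : V → V → Prop
  irrefl : ∀ x, ¬ E x x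
  asymm : ∀ x y, E x y → ¬ E y x
  /-- the weight function -/
  w : V → ℕ
  w_pos : ∀ x, 1 ≤ w x
  source_one : ∀ x, (∀ y, ¬ E y x) → w x = 1

namespace WOGraph

variable {V : Type}

/-- The underlying simple graph `G` of `D`. -/
def graph (D : WOGraph V) : SimpleGraph V := SimpleGraph.fromRel D.E

/-- Out-neighbourhood `N⁺_D(x)`. -/
def outN (D : WOGraph V) (x : V) : Set V := {y | D.E x y}

/-- In-neighbourhood `N⁻_D(x)`. -/
def inN (D : WOGraph V) (x : V) : Set V := {y | D.E y x}

/-- Neighbourhood `N_D(x)`. -/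
def nbr (D : WOGraph V) (x : V) : Set V := {y | D.E x y ∨ D.E y x}

/-- `N_D(A)` for a set `A` of vertices. -/
def nbrS (D : WOGraph V) (A : Set V) : Set V := {y | ∃ a ∈ A, y ∈ D.nbr a}

/-- `N⁺_D(A)` for a set `A` of vertices. -/
def outNS (D : WOGraph V) (A : Set V) : Set V := {y | ∃ a ∈ A, D.E a y}

/-- `V⁺`, the set of vertices of weight `> 1`. -/
def Vplus (D : WOGraph V) : Set V := {x | 1 < D.w x}

/-- A vertex cover of `D`. -/
def IsVC (D : WOGraph V) (C : Set V) : Prop := ∀ u v, D.E u v → u ∈ C ∨ v ∈ C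

/-- `L₁(C)`. -/
def L1 (D : WOGraph V) (C : Set V) : Set V := {x | x ∈ C ∧ ∃ y, D.E x y ∧ y ∉ C}

/-- `L₂(C)`. -/
def L2 (D : WOGraph V) (C : Set V) : Set V :=
  {x | x ∈ C ∧ x ∉ D.L1 C ∧ ∃ y, D.E y x ∧ y ∉ C}

/-- `L₃(C)`. -/
def L3 (D : WOGraph V) (C : Set V) : Set V := {x | x ∈ C ∧ x ∉ D.L1 C ∧ x ∉ D.L2 C}

/-- A strong vertex cover of `D`. -/
def IsStrongVC (D : WOGraph V) (C : Set V) : Prop :=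
  D.IsVC C ∧ ∀ x ∈ D.L3 C, ∃ y, D.E y x ∧ y ∈ C ∧ y ∉ D.L1 C ∧ 1 < D.w y

/-- A weighted oriented subgraph of `D`. -/
structure OSub (D : WOGraph V) where
  verts : Set V
  E : V → V → Prop
  sub : ∀ u v, E u v → D.E u v
  memL : ∀ u v, E u v → u ∈ verts
  memR : ∀ u v, E u v → v ∈ verts

namespace OSub

variable {D : WOGraph V}

/-- The underlying simple graph of a weighted oriented subgraph. -/
def graph (H : D.OSub) : SimpleGraph V := SimpleGraph.fromRel H.E

/-- Neighbourhood inside the subgraph. -/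
def nbr (H : D.OSub) (x : V) : Set V := {y | H.E x y ∨ H.E y x}

/-- Degree inside the subgraph. -/
noncomputable def deg (H : D.OSub) (x : V) : ℕ := (H.nbr x).ncard

/-- `H` is contained in `K`. -/
def le (H K : D.OSub) : Prop := H.verts ⊆ K.verts ∧ ∀ u v, H.E u v → K.E u v

end OSub

/-- The induced weighted oriented subgraph on a set `A` of vertices. -/
def induced (D : WOGraph V) (A : Set V) : D.OSub where
  verts := A
  E u v := D.E u v ∧ u ∈ A ∧ v ∈ A
  sub _ _ h := h.1
  memL _ _ h := h.2.1
  memR _ _ h := h.2.2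

/-- `K` is an induced weighted oriented subgraph of `D`. -/
def IsInducedSub {D : WOGraph V} (K : D.OSub) : Prop :=
  ∀ u v, D.E u v → u ∈ K.verts → v ∈ K.verts → K.E u v

/-- A root oriented tree (ROT) with parent `v`. -/
def IsROT (D : WOGraph V) (T : D.OSub) (v : V) : Prop :=
  v ∈ T.verts ∧ T.graph.IsAcyclic ∧
  (∀ x ∈ T.verts, Relation.ReflTransGen T.E v x) ∧
  (∀ x ∈ T.verts, D.w x = 1 → (T.deg x = 1 ∧ x ≠ v) ∨ (T.verts = {v} ∧ x = v))

/-- A unicycle oriented subgraph whose (unique) cycle has vertex set `Cs`. -/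
def IsUnicycle (D : WOGraph V) (B : D.OSub) (Cs : Set V) : Prop :=
  (∃ (n : ℕ) (f : ZMod n → V), 3 ≤ n ∧ Function.Injective f ∧ Set.range f = Cs ∧
      ∀ i, B.E (f i) (f (i + 1))) ∧
  (∀ (a : V) (p : B.graph.Walk a a), p.IsCycle → {x | x ∈ p.support} = Cs) ∧
  (∀ y ∈ B.verts, y ∉ Cs → ∃ x ∈ Cs, Relation.ReflTransGen B.E x y) ∧
  (∀ x ∈ B.verts, D.w x = 1 → B.deg x = 1)

/-- A `⋆`-semi-forest structure on a weighted oriented subgraph `H` of `D`. -/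
structure SSF (D : WOGraph V) (H : D.OSub) where
  r : ℕ
  s : ℕ
  T : Fin r → D.OSub
  parent : Fin r → V
  B : Fin s → D.OSub
  Cs : Fin s → Set V
  hT : ∀ i, D.IsROT (T i) (parent i)
  hB : ∀ j, D.IsUnicycle (B j) (Cs j)
  hverts : H.verts = (⋃ i, (T i).verts) ∪ (⋃ j, (B j).verts)
  hE : ∀ u v, H.E u v ↔ ((∃ i, (T i).E u v) ∨ (∃ j, (B j).E u v))
  hTT : ∀ i i', i ≠ i' → Disjoint (T i).verts (T i').verts
  hBB : ∀ j j', j ≠ j' → Disjoint (B j).verts (B j').verts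
  hTB : ∀ i j, Disjoint (T i).verts (B j).verts
  wv : Fin r → V
  hwv_not : ∀ i, wv i ∉ H.verts
  hwv_nbr : ∀ i, wv i ∈ D.nbr (parent i)
  W1 : Set V
  W2 : Set V
  hW_union : W1 ∪ W2 = Set.range wv
  hW_disj : Disjoint W1 W2
  hW1_stable : ∀ x ∈ W1, ∀ y ∈ W1, ¬ D.graph.Adj x y
  hW2_plus : W2 ⊆ D.Vplus
  hW2_edge : ∀ i, wv i ∈ W2 → D.E (wv i) (parent i)
  hW1_out : D.outNS (W2 ∪ ({x | x ∈ H.verts ∧ 2 ≤ H.deg x} ∪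
      {x | (∃ i, parent i = x) ∧ H.deg x = 1})) ∩ W1 = ∅

/-- The set `H̃` associated with a `⋆`-semi-forest. -/
noncomputable def SSF.tilde {D : WOGraph V} {H : D.OSub} (F : D.SSF H) : Set V :=
  {x | x ∈ H.verts ∧ 2 ≤ H.deg x} ∪ {x | (∃ i, F.parent i = x) ∧ H.deg x = 1}

/-- `K` has a generating `⋆`-semi-forest. -/
def HasGenSSF (D : WOGraph V) (K : D.OSub) : Prop :=
  ∃ H : D.OSub, Nonempty (D.SSF H) ∧ H.verts = K.verts

/-- The `⋆`-condition for a 5-tuple `(a', a, b, b', c)` written along an induced 5-cycle. -/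
def StarCond (D : WOGraph V) (a' a b b' c : V) : Prop :=
  (D.E a' a ∧ D.w a' = 1) ∧
  (D.inN a ⊆ D.nbr c ∧ D.inN a ∩ D.Vplus ⊆ D.inN c) ∧
  (D.nbr b' ⊆ D.nbr a' ∪ D.outN a ∧ D.inN b' ∩ D.Vplus ⊆ D.inN a')

/-- The `⋆`-property for an induced 5-cycle `z 0, z 1, z 2, z 3, z 4`. -/
def HasStarProp (D : WOGraph V) (z : Fin 5 → V) : Prop :=
  ∀ i : Fin 5,
    (D.E (z i) (z (i + 1)) ∧ 1 < D.w (z i) →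
      StarCond D (z (i - 1)) (z i) (z (i + 1)) (z (i + 2)) (z (i + 3))) ∧
    (D.E (z (i + 1)) (z i) ∧ 1 < D.w (z (i + 1)) →
      StarCond D (z (i + 2)) (z (i + 1)) (z i) (z (i - 1)) (z (i - 2)))

/-- The edge ideal `I(D)` of a weighted oriented graph in `k[x_v : v ∈ V]`. -/
noncomputable def edgeIdeal (k : Type) [Field k] (D : WOGraph V) : Ideal (MvPolynomial V k) :=
  Ideal.span {f | ∃ u v, D.E u v ∧ f = MvPolynomial.X u * MvPolynomial.X v ^ D.w v}

end WOGraph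

/-! ## Generic graph notions -/

/-- A vertex cover of a simple graph. -/
def gVC {W : Type} (G : SimpleGraph W) (C : Set W) : Prop :=
  ∀ u v, G.Adj u v → u ∈ C ∨ v ∈ C

/-- The vertex cover number `τ(G)`. -/
noncomputable def tau {W : Type} (G : SimpleGraph W) : ℕ :=
  sInf {n | ∃ C : Set W, gVC G C ∧ C.ncard = n}

/-- A stable (independent) set. -/
def Stable {W : Type} (G : SimpleGraph W) (S : Set W) : Prop :=
  ∀ x ∈ S, ∀ y ∈ S, ¬ G.Adj x y

/-- `G` is well-covered: all maximal stable sets have the same cardinality. -/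
def WellCovered {W : Type} (G : SimpleGraph W) : Prop :=
  ∀ S T : Set W, Maximal (Stable G) S → Maximal (Stable G) T → S.ncard = T.ncard

/-- `e` is (the vertex set of) an edge of `G`. -/
def IsEdgeSet {W : Type} (G : SimpleGraph W) (e : Set W) : Prop :=
  ∃ u v, G.Adj u v ∧ e = {u, v}

/-- An edge `e = {b, b'}` has the property (P). -/
def PropP {W : Type} (G : SimpleGraph W) (e : Set W) : Prop :=
  ∀ a b a' b', e = {b, b'} → G.Adj a b → G.Adj a' b' → a ∉ e → a' ∉ e → G.Adj a a'

/-- A matching of `G`, as a set of (vertex sets of) edges. -/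
def IsMatchingSet {W : Type} (G : SimpleGraph W) (M : Set (Set W)) : Prop :=
  (∀ e ∈ M, IsEdgeSet G e) ∧ M.Pairwise Disjoint

/-- A perfect matching of `G`. -/
def IsPerfectMatchingSet {W : Type} (G : SimpleGraph W) (M : Set (Set W)) : Prop :=
  IsMatchingSet G M ∧ ⋃₀ M = Set.univ

/-- The matching number `ν(G)`. -/
noncomputable def nu {W : Type} (G : SimpleGraph W) : ℕ :=
  sSup {n | ∃ M, IsMatchingSet G M ∧ M.ncard = n}

/-- The degree of a vertex. -/
noncomputable def gdeg {W : Type} (G : SimpleGraph W) (x : W) : ℕ := (G.neighborSet x).ncard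

/-- `v` is a simplicial vertex: its closed neighbourhood is a clique. -/
def IsSimplicialVtx {W : Type} (G : SimpleGraph W) (v : W) : Prop :=
  G.IsClique (insert v (G.neighborSet v))

/-- The set `S_G` of (vertex sets of) simplexes of `G`. -/
def SimplexSets {W : Type} (G : SimpleGraph W) : Set (Set W) :=
  {S | ∃ v, IsSimplicialVtx G v ∧ S = insert v (G.neighborSet v)}

/-- `G` is a simplicial graph. -/
def SimplicialGraph {W : Type} (G : SimpleGraph W) : Prop :=
  ∀ v, IsSimplicialVtx G v ∨ ∃ u, G.Adj v u ∧ IsSimplicialVtx G u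

/-- The cycle graph on `ZMod n`. -/
def cycGraph (n : ℕ) : SimpleGraph (ZMod n) := SimpleGraph.fromRel (fun i j => j = i + 1)

/-- `G` is chordal: it has no induced cycles of length `≥ 4`. -/
def Chordal {W : Type} (G : SimpleGraph W) : Prop :=
  ∀ n : ℕ, 4 ≤ n → ∀ A : Set W, IsEmpty (G.induce A ≃g cycGraph n)

/-- `G` has a cycle of length `k`. -/
def HasCycleLen {W : Type} (G : SimpleGraph W) (k : ℕ) : Prop :=
  ∃ (a : W) (p : G.Walk a a), p.IsCycle ∧ p.length = k

/-- `z 0, z 1, z 2, z 3, z 4` is an induced 5-cycle of `G`. -/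
def IsInduced5Cycle {W : Type} (G : SimpleGraph W) (z : Fin 5 → W) : Prop :=
  Function.Injective z ∧ ∀ i j : Fin 5, G.Adj (z i) (z j) ↔ (j = i + 1 ∨ i = j + 1)

/-- A basic 5-cycle: an induced 5-cycle without two adjacent vertices of degree `≥ 3`. -/
def IsBasic5Cycle {W : Type} (G : SimpleGraph W) (z : Fin 5 → W) : Prop :=
  IsInduced5Cycle G z ∧ ∀ i : Fin 5, ¬ (3 ≤ gdeg G (z i) ∧ 3 ≤ gdeg G (z (i + 1)))

/-- The set `C_G` of (vertex sets of) basic 5-cycles of `G`. -/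
def Basic5Sets {W : Type} (G : SimpleGraph W) : Set (Set W) :=
  {A | ∃ z : Fin 5 → W, IsBasic5Cycle G z ∧ A = Set.range z}

/-- The clique number `ω(G)`. -/
noncomputable def cliqueNum' {W : Type} (G : SimpleGraph W) : ℕ :=
  sSup {n | ∃ s : Set W, G.IsClique s ∧ s.ncard = n}

/-- `G` is a perfect graph. -/
def IsPerfectGraph {W : Type} (G : SimpleGraph W) : Prop :=
  ∀ A : Set W, (G.induce A).chromaticNumber = (cliqueNum' (G.induce A) : ℕ∞)

/-- A `τ`-reduction of `G` into the induced subgraphs on the `A i`. -/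
noncomputable def TauReduction {W : Type} (G : SimpleGraph W) (s : ℕ) (A : Fin s → Set W) : Prop :=
  (∀ i j, i ≠ j → Disjoint (A i) (A j)) ∧ (⋃ i, A i) = Set.univ ∧
  tau G = ∑ i, tau (G.induce (A i))

/-- `G` is an SCQ graph witnessed by the matching `Q`. -/
def IsSCQ {V : Type} (D : WOGraph V) (Q : Set (Set V)) : Prop :=
  (Q = ∅ ∨ (IsMatchingSet D.graph Q ∧ ∀ e ∈ Q, PropP D.graph e)) ∧
  (∀ A ∈ SimplexSets D.graph ∪ Basic5Sets D.graph ∪ Q,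
    ∀ B ∈ SimplexSets D.graph ∪ Basic5Sets D.graph ∪ Q, A = B ∨ Disjoint A B) ∧
  ⋃₀ (SimplexSets D.graph ∪ Basic5Sets D.graph ∪ Q) = Set.univ

/-- An ideal is unmixed if all its associated primes have the same height. -/
def IsUnmixed {R : Type} [CommRing R] (I : Ideal R) : Prop :=
  ∀ p q : Ideal R, p ∈ associatedPrimes R (R ⧸ I) → q ∈ associatedPrimes R (R ⧸ I) →
    ∀ (hp : p.IsPrime) (hq : q.IsPrime),
      Order.height (⟨p, hp⟩ : PrimeSpectrum R) = Order.height (⟨q, hq⟩ : PrimeSpectrum R)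
/-! ## Concrete graphs -/

/-- The 7-cycle `C₇`. -/
def C7graph : SimpleGraph (ZMod 7) := cycGraph 7

/-- Vertices of `T₁₀`. -/
inductive T10V | v | a1 | a2 | a3 | b1 | b2 | b3 | c1 | c2 | c3
deriving DecidableEq

open T10V in
instance : Fintype T10V where
  elems := {v, a1, a2, a3, b1, b2, b3, c1, c2, c3}
  complete := by intro x; cases x <;> decide

open T10V in
/-- The graph `T₁₀`. -/
def T10graph : SimpleGraph T10V := SimpleGraph.fromRel (fun x y =>
  (x, y) ∈ ([(v,a1), (v,a2), (v,a3), (a1,b1), (a2,b2), (a3,b3), (b1,c1), (b2,c2),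
    (b3,c3), (c1,c2), (c2,c3), (c3,c1)] : List (T10V × T10V)))

/-- Vertices of `Q₁₃`. -/
inductive Q13V | a1 | a2 | b1 | b2 | c1 | c2 | d1 | d2 | g1 | g2 | h | h' | v
deriving DecidableEq

open Q13V in
instance : Fintype Q13V where
  elems := {a1, a2, b1, b2, c1, c2, d1, d2, g1, g2, h, h', v}
  complete := by intro x; cases x <;> decide

open Q13V in
/-- The graph `Q₁₃`. -/
def Q13graph : SimpleGraph Q13V := SimpleGraph.fromRel (fun x y =>
  (x, y) ∈ ([(a1,a2), (a1,d1), (a2,d2), (d1,c1), (d1,g1), (d1,h), (d2,c2), (d2,g2),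
    (d2,h), (g1,b1), (g1,h'), (g2,b2), (g2,h'), (b1,c2), (b2,c1), (h,v),
    (h',v)] : List (Q13V × Q13V)))

/-- Vertices of `P₁₃`. -/
inductive P13V | a1 | a2 | a3 | a4 | b1 | b2 | b3 | b4 | c1 | c2 | d1 | d2 | v
deriving DecidableEq

open P13V in
instance : Fintype P13V where
  elems := {a1, a2, a3, a4, b1, b2, b3, b4, c1, c2, d1, d2, v}
  complete := by intro x; cases x <;> decide

open P13V in
/-- The graph `P₁₃`. -/
def P13graph : SimpleGraph P13V := SimpleGraph.fromRel (fun x y =>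
  (x, y) ∈ ([(a1,a2), (a1,b1), (a2,b2), (a3,a4), (a3,b3), (a4,b4), (b1,c1), (b2,c1),
    (b3,c2), (b4,c2), (c1,c2), (d1,b1), (d1,b3), (d2,b2), (d2,b4), (v,d1),
    (v,d2)] : List (P13V × P13V)))

/-- Vertices of `P₁₄`. -/
inductive P14V | a1 | a2 | a3 | a4 | a5 | a6 | a7 | b1 | b2 | b3 | b4 | b5 | b6 | b7
deriving DecidableEq

open P14V in
instance : Fintype P14V where
  elems := {a1, a2, a3, a4, a5, a6, a7, b1, b2, b3, b4, b5, b6, b7}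
  complete := by intro x; cases x <;> decide

open P14V in
/-- The graph `P₁₄`. -/
def P14graph : SimpleGraph P14V := SimpleGraph.fromRel (fun x y =>
  (x, y) ∈ ([(a1,a2), (a2,a3), (a3,a4), (a4,a5), (a5,a6), (a6,a7), (a7,a1),
    (a1,b1), (a2,b2), (a3,b3), (a4,b4), (a5,b5), (a6,b6), (a7,b7),
    (b1,b3), (b2,b4), (b3,b5), (b4,b6), (b5,b7), (b6,b1), (b7,b2)] : List (P14V × P14V)))

/-- Vertices of `P₁₀`. -/
inductive P10V | a1 | a2 | b1 | b2 | c1 | c2 | d1 | d2 | g1 | g2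
deriving DecidableEq

open P10V in
instance : Fintype P10V where
  elems := {a1, a2, b1, b2, c1, c2, d1, d2, g1, g2}
  complete := by intro x; cases x <;> decide

open P10V in
/-- The graph `P₁₀`. -/
def P10graph : SimpleGraph P10V := SimpleGraph.fromRel (fun x y =>
  (x, y) ∈ ([(a1,b1), (b1,d2), (d2,d1), (d1,b2), (b2,a2), (a1,g1), (g1,d1), (g1,c1),
    (c1,c2), (c2,g2), (g2,a2), (d2,g2)] : List (P10V × P10V)))


open MvPolynomial

section HeightAux

variable {k : Type} [Field k]

/-- Inner step: extract a nonzero coefficient whose image lands one prime up. -/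
lemma aux_poly_step {A B : Type} [CommRing A] [CommRing B]
    (rh : B →+* A) (q0 q1 : Ideal A) (hq0 : q0.IsPrime)
    (h01 : q0 ≤ q1) (t : A) (ht1 : t ∈ q1) (ht0 : t ∉ q0) :
    ∀ (P : Polynomial B), P ≠ 0 → Polynomial.eval₂ rh t P ∈ q0 →
      ∃ c : B, c ≠ 0 ∧ rh c ∈ q1 := by
  intro P
  induction P using Polynomial.recOnHorner with
  | M0 => intro h; exact absurd rfl h
  | MC P a hPa ha ih =>
      intro _ hev
      refine ⟨a, ha, ?_⟩
      rw [Polynomial.eval₂_add, Polynomial.eval₂_C] at hev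
      have hP : Polynomial.eval₂ rh t P ∈ q1 := by
        have hPX : Polynomial.X * P.divX = P := by
          have := Polynomial.X_mul_divX_add P
          rwa [hPa, map_zero, add_zero] at this
        rw [← hPX, Polynomial.eval₂_mul, Polynomial.eval₂_X]
        exact Ideal.mul_mem_right _ _ ht1
      have := q1.sub_mem (h01 hev) hP
      simpa using this
  | MX P hP ih =>
      intro _ hev
      rw [Polynomial.eval₂_mul, Polynomial.eval₂_X] at hev
      rcases hq0.mem_or_mem hev with h | h
      · exact ih hP h
      · exact absurd h ht0

/-- Glue: `aeval` over `Fin (n+1)` via `finSuccEquiv`. -/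
lemma aux_aeval_finSuccEquiv {A : Type} [CommRing A] [Algebra k A] (n : ℕ)
    (g : Fin (n + 1) → A) (Q : MvPolynomial (Fin (n + 1)) k) :
    aeval g Q = Polynomial.eval₂ ((aeval (g ∘ Fin.succ)).toRingHom) (g 0)
      (finSuccEquiv k n Q) := by
  have : (aeval g).toRingHom =
      (Polynomial.eval₂RingHom ((aeval (g ∘ Fin.succ)).toRingHom) (g 0)).comp
        (finSuccEquiv k n : MvPolynomial (Fin (n+1)) k →+* Polynomial (MvPolynomial (Fin n) k)) := by
    apply MvPolynomial.ringHom_ext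
    · intro a
      simp [finSuccEquiv_apply, Polynomial.eval₂_C, aeval_C]
    · intro i
      refine Fin.cases ?_ (fun j => ?_) i
      · simp [finSuccEquiv_X_zero]
      · simp [finSuccEquiv_X_succ]
  have h2 := congrArg (fun f => f Q) (congrArg DFunLike.coe this)
  simpa using h2

/-- The Coquand–Lombardi style chain lemma. -/
lemma aux_chain {A : Type} [CommRing A] [Algebra k A] :
    ∀ (n : ℕ) (q : Fin (n + 1) → Ideal A), (∀ i, (q i).IsPrime) →
      (∀ i j : Fin (n + 1), i ≤ j → q i ≤ q j) →
      ∀ g : Fin n → A, (∀ i : Fin n, g i ∈ q i.succ ∧ g i ∉ q i.castSucc) →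
      ∀ Q : MvPolynomial (Fin n) k, Q ≠ 0 → aeval g Q ∈ q 0 → False := by
  intro n
  induction n with
  | zero =>
      intro q hq _ g _ Q hQ h0
      obtain ⟨a, rfl⟩ := MvPolynomial.C_surjective (Fin 0) Q
      have ha : a ≠ 0 := fun h => hQ (by simp [h])
      have : IsUnit (aeval g (C a) : A) := by
        rw [aeval_C]
        exact (IsUnit.mk0 a ha).map (algebraMap k A)
      exact (hq 0).ne_top ((q 0).eq_top_of_isUnit_mem h0 this)
  | succ n ih =>
      intro q hq hmono g hg Q hQ h0
      rw [aux_aeval_finSuccEquiv] at h0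
      have hP : finSuccEquiv k n Q ≠ 0 := fun h => hQ (by
        have := congrArg (finSuccEquiv k n).symm h
        simpa using this)
      obtain ⟨c, hc, hcmem⟩ := aux_poly_step _ (q 0) (q 1) (hq 0)
        (hmono 0 1 (Fin.zero_le 1)) (g 0) (hg 0).1 (by
          have := (hg 0).2
          simpa using this) _ hP h0
      refine ih (fun i => q i.succ) (fun i => hq _)
        (fun i j hij => hmono _ _ (Fin.succ_le_succ_iff.mpr hij))
        (g ∘ Fin.succ) (fun i => ?_) c hc ?_
      · constructor
        · have := (hg i.succ).1
          simpa [Fin.succ_castSucc] using this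
        · have := (hg i.succ).2
          rw [← Fin.succ_castSucc] at this
          simpa using this
      · simpa using hcmem

end HeightAux

section Counting

variable {k : Type} [Field k] {V : Type} [Fintype V]

lemma aux_exists_annihilating (g : Fin (Fintype.card V + 1) → MvPolynomial V k) :
    ∃ Q : MvPolynomial (Fin (Fintype.card V + 1)) k, Q ≠ 0 ∧ aeval g Q = 0 := by
  haveI := Classical.decEq V
  by_contra hcon
  push_neg at hcon
  have hker : LinearMap.ker (aeval (R := k) g).toLinearMap = ⊥ := by
    rw [LinearMap.ker_eq_bot']
    intro Q hQ
    by_contra hne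
    exact hcon Q hne hQ
  set D := (Finset.univ.sup fun i : Fin (Fintype.card V + 1) => (g i).totalDegree) + 1 with hD
  have hgD : ∀ i, (g i).totalDegree ≤ D := by
    intro i
    rw [hD]
    exact le_trans (Finset.le_sup (f := fun i => (g i).totalDegree) (Finset.mem_univ i)) (Nat.le_succ _)
  set c := (Fintype.card V + 1) * D + 1 with hc
  set N := c ^ Fintype.card V with hN
  set m := (Fintype.card V + 1) * N * D with hm
  set e : (Fin (Fintype.card V + 1) → Fin (N + 1)) → (Fin (Fintype.card V + 1) →₀ ℕ) :=
    fun t => Finsupp.equivFunOnFinite.symm (fun i => (t i : ℕ)) with he_def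
  have he : Function.Injective e := by
    intro a b hab
    have := Finsupp.equivFunOnFinite.symm.injective hab
    funext i
    exact Fin.val_injective (congrFun this i)
  have li0 : LinearIndependent k
      (fun t : Fin (Fintype.card V + 1) → Fin (N + 1) =>
        (monomial (e t) (1:k) : MvPolynomial (Fin (Fintype.card V + 1)) k)) := by
    have := (basisMonomials (Fin (Fintype.card V + 1)) k).linearIndependent.comp e he
    rw [coe_basisMonomials] at this
    exact this
  have li1 : LinearIndependent k
      (fun t : Fin (Fintype.card V + 1) → Fin (N + 1) => aeval g (monomial (e t) (1:k))) :=
    li0.map' (aeval g).toLinearMap hker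
  have hmem : ∀ t : Fin (Fintype.card V + 1) → Fin (N + 1),
      aeval g (monomial (e t) (1:k)) ∈ restrictDegree V k m := by
    intro t
    apply restrictTotalDegree_le_restrictDegree
    rw [mem_restrictTotalDegree]
    rw [aeval_monomial, map_one, one_mul]
    calc ((e t).prod fun i k' => g i ^ k').totalDegree
        ≤ ∑ i ∈ (e t).support, (g i ^ (e t i)).totalDegree :=
          totalDegree_finset_prod _ _
      _ ≤ ∑ _i ∈ (e t).support, N * D := by
          apply Finset.sum_le_sum
          intro i _
          calc (g i ^ (e t i)).totalDegree ≤ (e t i) * (g i).totalDegree :=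
                totalDegree_pow _ _
            _ ≤ N * D := by
                apply Nat.mul_le_mul _ (hgD i)
                have : e t i = (t i : ℕ) := rfl
                rw [this]
                exact Fin.is_le _
      _ ≤ ∑ _i : Fin (Fintype.card V + 1), N * D := by
          apply Finset.sum_le_sum_of_subset (Finset.subset_univ _)
      _ = m := by
          rw [Finset.sum_const, Finset.card_univ, Fintype.card_fin, smul_eq_mul, hm, mul_assoc]
  set W := restrictDegree V k m with hW
  have li2 : LinearIndependent k
      (fun t : Fin (Fintype.card V + 1) → Fin (N + 1) =>
        (⟨aeval g (monomial (e t) (1:k)), hmem t⟩ : W)) :=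
    LinearIndependent.of_comp W.subtype li1
  have hcard := li2.fintype_card_le_finrank
  set s : Set (V →₀ ℕ) := {f | ∀ i, f i ≤ m} with hs
  set φ : s → (V → Fin (m + 1)) :=
    fun f => fun v => ⟨f.1 v, Nat.lt_succ_of_le (f.2 v)⟩ with hφ
  have φinj : Function.Injective φ := by
    intro a b hab
    apply Subtype.ext
    apply Finsupp.ext
    intro v
    have := congrFun hab v
    simpa [hφ] using congrArg Fin.val this
  haveI : Fintype s := Fintype.ofInjective φ φinj
  have hrank : Module.finrank k W = Fintype.card s :=
    Module.finrank_eq_card_basis (basisRestrictSupport k s)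
  have hcard2 : Fintype.card s ≤ (m + 1) ^ Fintype.card V := by
    calc Fintype.card s ≤ Fintype.card (V → Fin (m + 1)) := Fintype.card_le_of_injective φ φinj
      _ = (m + 1) ^ Fintype.card V := by rw [Fintype.card_fun, Fintype.card_fin]
  have hbig : (N + 1) ^ (Fintype.card V + 1) ≤ (m + 1) ^ Fintype.card V := by
    calc (N + 1) ^ (Fintype.card V + 1)
        = Fintype.card (Fin (Fintype.card V + 1) → Fin (N + 1)) := by
          rw [Fintype.card_fun, Fintype.card_fin, Fintype.card_fin]
      _ ≤ Module.finrank k W := hcard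
      _ = Fintype.card s := hrank
      _ ≤ (m + 1) ^ Fintype.card V := hcard2
  have hc1 : 1 ≤ c := Nat.le_add_left 1 _
  have hN1 : 1 ≤ N := Nat.one_le_pow _ _ hc1
  have h1 : m + 1 ≤ N * c := by
    calc m + 1 = (Fintype.card V + 1) * N * D + 1 := rfl
      _ ≤ (Fintype.card V + 1) * N * D + N := by omega
      _ = N * ((Fintype.card V + 1) * D) + N := by ring
      _ = N * c := by rw [hc]; ring
  have h2 : (m + 1) ^ Fintype.card V ≤ N ^ (Fintype.card V + 1) := by
    calc (m + 1) ^ Fintype.card V ≤ (N * c) ^ Fintype.card V :=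
          Nat.pow_le_pow_left h1 _
      _ = N ^ Fintype.card V * c ^ Fintype.card V := Nat.mul_pow _ _ _
      _ = N ^ Fintype.card V * N := by rw [hN]
      _ = N ^ (Fintype.card V + 1) := by rw [pow_succ]
  have h3 : N ^ (Fintype.card V + 1) < (N + 1) ^ (Fintype.card V + 1) :=
    Nat.pow_lt_pow_left (Nat.lt_succ_self N) (by omega)
  omega

lemma aux_height_lt_top (p : PrimeSpectrum (MvPolynomial V k)) :
    Order.height p < ⊤ := by
  have hle : Order.height p ≤ ((Fintype.card V + 1 : ℕ) : ℕ∞) := by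
    apply Order.height_le
    intro σ _
    set d := Fintype.card V with hd
    by_contra hL
    push_neg at hL
    have hL' : d + 2 ≤ σ.length := by exact_mod_cast hL
    set q : Fin (d + 2) → Ideal (MvPolynomial V k) :=
      fun i => (σ.toFun ⟨i.1, by omega⟩).asIdeal with hq_def
    have hq : ∀ i, (q i).IsPrime := fun i => (σ.toFun _).isPrime
    have hmono : ∀ i j : Fin (d + 2), i ≤ j → q i ≤ q j := by
      intro i j hij
      exact σ.monotone (by exact hij)
    have hstrict : ∀ i : Fin (d + 1), ∃ a, a ∈ q i.succ ∧ a ∉ q i.castSucc := by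
      intro i
      have : q i.castSucc < q i.succ := by
        apply σ.strictMono
        simp [Fin.lt_def]
      exact SetLike.exists_of_lt this
    choose g hg1 hg2 using hstrict
    obtain ⟨Q, hQ, hQ0⟩ := aux_exists_annihilating (k := k) g
    exact aux_chain (d + 1) q hq hmono g (fun i => ⟨hg1 i, hg2 i⟩) Q hQ
      (by rw [hQ0]; exact (q 0).zero_mem)
  exact lt_of_le_of_lt hle (ENat.coe_lt_top _)

end Counting


section IdealAux

open MvPolynomial

variable {V : Type} {k : Type} [Field k]

lemma aux_pair_le (u v : V) (huv : u ≠ v) (a b : ℕ) (μ : V →₀ ℕ)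
    (h1 : a ≤ μ u) (h2 : b ≤ μ v) :
    Finsupp.single u a + Finsupp.single v b ≤ μ := by
  classical
  rw [Finsupp.le_def]
  intro w
  rw [Finsupp.add_apply, Finsupp.single_apply, Finsupp.single_apply]
  by_cases hu : u = w
  · subst hu
    rw [if_pos rfl, if_neg (fun hv : v = u => huv hv.symm)]
    simpa using h1
  · rw [if_neg hu]
    by_cases hv : v = w
    · subst hv
      rw [if_pos rfl]
      simpa using h2
    · rw [if_neg hv]
      simp

open Classical in
lemma aux_psi_monomial (C : Set V) (ν : V →₀ ℕ) (a : k) :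
    aeval (fun v => if v ∈ C then 0 else X v) (monomial ν a) =
      (if ∀ c ∈ C, ν c = 0 then monomial ν a else 0 : MvPolynomial V k) := by
  rw [aeval_monomial]
  by_cases hfree : ∀ c ∈ C, ν c = 0
  · rw [if_pos hfree]
    have hprod : (ν.prod fun v e => ((if v ∈ C then 0 else X v) : MvPolynomial V k) ^ e) =
        ν.prod fun v e => (X v : MvPolynomial V k) ^ e := by
      apply Finsupp.prod_congr
      intro v hv
      have hv' : v ∉ C := fun hc => (Finsupp.mem_support_iff.mp hv) (hfree v hc)
      rw [if_neg hv']
    rw [hprod, monomial_eq, algebraMap_eq]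
  · rw [if_neg hfree]
    push_neg at hfree
    obtain ⟨c, hcC, hc⟩ := hfree
    have hprod : (ν.prod fun v e => ((if v ∈ C then 0 else X v) : MvPolynomial V k) ^ e) = 0 := by
      rw [Finsupp.prod]
      apply Finset.prod_eq_zero (Finsupp.mem_support_iff.mpr hc)
      rw [if_pos hcC, zero_pow hc]
    rw [hprod, mul_zero]

open Classical in
lemma aux_span_X_isPrime (C : Set V) :
    (Ideal.span (X '' C) : Ideal (MvPolynomial V k)).IsPrime := by
  set ψ : MvPolynomial V k →ₐ[k] MvPolynomial V k :=
    aeval (fun v => if v ∈ C then 0 else X v) with hψ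
  have hker : Ideal.span (X '' C) = RingHom.ker (ψ : MvPolynomial V k →+* MvPolynomial V k) := by
    apply le_antisymm
    · rw [Ideal.span_le]
      rintro _ ⟨c, hc, rfl⟩
      have : ψ (X c) = 0 := by rw [hψ]; simp [aeval_X, if_pos hc]
      simpa [RingHom.mem_ker] using this
    · intro f hf
      by_contra hns
      rw [mem_ideal_span_X_image] at hns
      push_neg at hns
      obtain ⟨μ, hμs, hμfree⟩ := hns
      have hco : coeff μ (ψ f) = coeff μ f := by
        conv_lhs => rw [f.as_sum, map_sum]
        rw [coeff_sum]
        rw [Finset.sum_eq_single μ]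
        · rw [hψ]
          rw [aux_psi_monomial, if_pos hμfree, coeff_monomial, if_pos rfl]
        · intro ν hν hνμ
          rw [hψ, aux_psi_monomial]
          by_cases h2 : ∀ c ∈ C, ν c = 0
          · rw [if_pos h2, coeff_monomial, if_neg hνμ]
          · rw [if_neg h2, coeff_zero]
        · intro h; exact absurd hμs h
      have hz : ψ f = 0 := by rwa [RingHom.mem_ker] at hf
      rw [hz, coeff_zero] at hco
      exact (MvPolynomial.mem_support_iff.mp hμs) hco.symm
  rw [hker]
  exact RingHom.ker_isPrime _

lemma aux_gen_monomial (u v : V) (n : ℕ) :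
    (X u * X v ^ n : MvPolynomial V k) =
      monomial (Finsupp.single u 1 + Finsupp.single v n) 1 := by
  rw [← pow_one (X u : MvPolynomial V k), X_pow_eq_monomial, X_pow_eq_monomial,
    monomial_mul, one_mul]

lemma aux_mem_edgeIdeal (D : WOGraph V) (f : MvPolynomial V k) :
    f ∈ WOGraph.edgeIdeal k D ↔ ∀ μ ∈ f.support, ∃ u v, D.E u v ∧
      Finsupp.single u 1 + Finsupp.single v (D.w v) ≤ μ := by
  have hset : {f : MvPolynomial V k | ∃ u v, D.E u v ∧ f = X u * X v ^ D.w v} =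
      (fun d0 => monomial d0 (1:k)) ''
        {d0 | ∃ u v, D.E u v ∧ d0 = Finsupp.single u 1 + Finsupp.single v (D.w v)} := by
    ext g
    constructor
    · rintro ⟨u, v, he, rfl⟩
      exact ⟨_, ⟨u, v, he, rfl⟩, (aux_gen_monomial u v (D.w v)).symm⟩
    · rintro ⟨d0, ⟨u, v, he, rfl⟩, rfl⟩
      exact ⟨u, v, he, (aux_gen_monomial u v (D.w v)).symm⟩
  have hEI : WOGraph.edgeIdeal k D = Ideal.span ((fun d0 => monomial d0 (1:k)) ''
      {d0 | ∃ u v, D.E u v ∧ d0 = Finsupp.single u 1 + Finsupp.single v (D.w v)}) :=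
    congrArg Ideal.span hset
  rw [hEI, mem_ideal_span_monomial_image]
  constructor
  · intro h μ hμ
    obtain ⟨si, ⟨u, v, he, rfl⟩, hle⟩ := h μ hμ
    exact ⟨u, v, he, hle⟩
  · intro h μ hμ
    obtain ⟨u, v, he, hle⟩ := h μ hμ
    exact ⟨_, ⟨u, v, he, rfl⟩, hle⟩

open Classical in
lemma aux_assoc [Fintype V] [Nonempty V] (D : WOGraph V) (C : Set V)
    (hcov : ∀ u v, D.E u v → u ∈ C ∨ v ∈ C)
    (hwit : ∀ c ∈ C, (∃ t, t ∉ C ∧ D.E c t) ∨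
      ∃ u, D.E u c ∧ (u ∉ C ∨ (u ∈ C ∧ 2 ≤ D.w u ∧ ∀ t, D.E u t → t ∈ C))) :
    IsAssociatedPrime (Ideal.span (X '' C) : Ideal (MvPolynomial V k))
      (MvPolynomial V k ⧸ WOGraph.edgeIdeal k D) := by
  set M := Finset.univ.sup D.w with hM
  have hMw : ∀ u, D.w u ≤ M := fun u => Finset.le_sup (Finset.mem_univ u)
  have hM1 : 1 ≤ M := le_trans (D.w_pos (Classical.arbitrary V)) (hMw _)
  set Good : V → Prop := fun u => u ∈ C ∧ 2 ≤ D.w u ∧ ∀ t, D.E u t → t ∈ C with hGoodDef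
  set mh : V →₀ ℕ := Finsupp.equivFunOnFinite.symm
    (fun v => if v ∈ C then (if Good v then D.w v - 1 else 0) else M) with hmh
  have hmhv : ∀ v, mh v = if v ∈ C then (if Good v then D.w v - 1 else 0) else M := by
    intro v; rw [hmh]; rfl
  have fact1 : ∀ v ∈ C, mh v < D.w v := by
    intro v hv
    rw [hmhv, if_pos hv]
    by_cases hg : Good v
    · rw [if_pos hg]
      have h2 : 2 ≤ D.w v := hg.2.1
      omega
    · rw [if_neg hg]
      exact D.w_pos v
  have fact2 : ∀ v, v ∉ C → mh v = M := by
    intro v hv; rw [hmhv, if_neg hv]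
  have fact4 : ∀ v ∈ C, 1 ≤ mh v → Good v := by
    intro v hv h1
    by_contra hg
    rw [hmhv, if_pos hv, if_neg hg] at h1
    omega
  have fact5 : ∀ v, v ∉ C ∨ Good v → 1 ≤ mh v := by
    intro v hv
    rcases hv with hv | hv
    · rw [fact2 v hv]; exact hM1
    · rw [hmhv, if_pos hv.1, if_pos hv]
      have h2 : 2 ≤ D.w v := hv.2.1
      omega
  refine isAssociatedPrime_iff.mpr ⟨aux_span_X_isPrime C, Ideal.Quotient.mk _ (monomial mh (1:k)), ?_⟩
  have hann : ∀ r : MvPolynomial V k,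
      r ∈ (⊥ : Submodule (MvPolynomial V k) (MvPolynomial V k ⧸ WOGraph.edgeIdeal k D)).colon
        {Ideal.Quotient.mk (WOGraph.edgeIdeal k D) (monomial mh (1:k))} ↔
      r * monomial mh (1:k) ∈ WOGraph.edgeIdeal k D := by
    intro r
    rw [Submodule.mem_colon_singleton, Submodule.mem_bot, ← Ideal.Quotient.mk_eq_mk,
      ← Submodule.Quotient.mk_smul, Submodule.Quotient.mk_eq_zero, smul_eq_mul]
  apply le_antisymm
  · rw [Ideal.span_le]
    rintro _ ⟨c, hc, rfl⟩
    rw [SetLike.mem_coe, hann]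
    have hXc : (X c : MvPolynomial V k) * monomial mh 1 =
        monomial (Finsupp.single c 1 + mh) 1 := by
      rw [← pow_one (X c : MvPolynomial V k), X_pow_eq_monomial, monomial_mul, one_mul]
    rw [aux_mem_edgeIdeal, hXc]
    intro μ hμ
    rw [support_monomial, if_neg one_ne_zero, Finset.mem_singleton] at hμ
    subst hμ
    by_cases hout : ∃ t, ¬ t ∈ C ∧ D.E c t
    · obtain ⟨t, htC, het⟩ := hout
      have hct : c ≠ t := fun h => D.irrefl c (h ▸ het)
      refine ⟨c, t, het, aux_pair_le c t hct 1 (D.w t) _ ?_ ?_⟩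
      · rw [Finsupp.add_apply, Finsupp.single_apply, if_pos rfl]
        omega
      · rw [Finsupp.add_apply, Finsupp.single_apply, if_neg hct, fact2 t htC]
        have := hMw t
        omega
    · rcases hwit c hc with h | ⟨u, heu, hu⟩
      · exact absurd h hout
      have hcin : ∀ t, D.E c t → t ∈ C := by
        intro t het
        by_contra h3
        exact hout ⟨t, h3, het⟩
      have huc : u ≠ c := fun h => D.irrefl c (h ▸ heu)
      refine ⟨u, c, heu, aux_pair_le u c huc 1 (D.w c) _ ?_ ?_⟩
      · rw [Finsupp.add_apply, Finsupp.single_apply, if_neg (fun h : c = u => huc h.symm),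
          zero_add]
        exact fact5 u hu
      · rw [Finsupp.add_apply, Finsupp.single_apply, if_pos rfl]
        by_cases h2 : 2 ≤ D.w c
        · have hgc : Good c := ⟨hc, h2, hcin⟩
          rw [hmhv, if_pos hc, if_pos hgc]
          omega
        · have := D.w_pos c
          omega
  · intro r hr
    rw [hann] at hr
    rw [mem_ideal_span_X_image]
    intro μ hμ
    by_contra hfree
    push_neg at hfree
    have hco : coeff (μ + mh) (r * monomial mh (1:k)) = coeff μ r := by
      rw [coeff_mul_monomial, mul_one]
    have hsup : (μ + mh) ∈ (r * monomial mh (1:k)).support := by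
      rw [MvPolynomial.mem_support_iff, hco]
      exact MvPolynomial.mem_support_iff.mp hμ
    obtain ⟨u, v, he, hle⟩ := (aux_mem_edgeIdeal D _).mp hr _ hsup
    have huv : u ≠ v := fun h => D.irrefl v (h ▸ he)
    rw [Finsupp.le_def] at hle
    have hvC : v ∉ C := by
      intro hvC
      have h1 := hle v
      rw [Finsupp.add_apply, Finsupp.add_apply, Finsupp.single_apply, Finsupp.single_apply,
        if_neg huv, if_pos rfl, hfree v hvC] at h1
      have := fact1 v hvC
      omega
    have huC : u ∈ C := (hcov u v he).resolve_right hvC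
    have h1 := hle u
    rw [Finsupp.add_apply, Finsupp.add_apply, Finsupp.single_apply, Finsupp.single_apply,
      if_pos rfl, if_neg (fun h : v = u => huv h.symm), hfree u huC, add_zero, zero_add] at h1
    exact hvC ((fact4 u huC h1).2.2 v he)

end IdealAux

/-- Lemma `StableSet`. -/
theorem stmt15 {V : Type} [Fintype V] (k : Type) [Field k] (D : WOGraph V)
    (z y x : V) (s : ℕ) (xs zs : Fin s → V)
    (hzy : D.E z y) (hyx : D.E y x) (hy : y ∈ D.Vplus)
    (hN : D.nbr x = insert y (Set.range xs))
    (hzs : ∀ i, zs i ∈ D.nbr (xs i) ∧ zs i ∉ D.outN y)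
    (hstable : Stable D.graph ({z, x} ∪ Set.range zs)) :
    ¬ IsUnmixed (WOGraph.edgeIdeal k D) := by
  classical
  haveI : Nonempty V := ⟨z⟩
  intro hun
  have hzx : z ≠ x := fun h => D.asymm y x hyx (h ▸ hzy)
  have hzsx : ∀ i, zs i ≠ x := fun i h =>
    (hzs i).2 (show D.E y (zs i) by rw [h]; exact hyx)
  set U : Set V := {u : V | D.E y u → u = x} with hU
  set A : Set V := {z, x} ∪ Set.range zs with hA
  have hAU : A ⊆ U := by
    rintro a (ha | ⟨i, rfl⟩)
    · rcases ha with rfl | rfl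
      · intro h; exact absurd h (D.asymm _ _ hzy)
      · intro _; rfl
    · intro h; exact absurd h (hzs i).2
  set 𝒮 : Set (Set V) := {B : Set V | A ⊆ B ∧ B ⊆ U ∧ Stable D.graph B} with h𝒮
  obtain ⟨S₂, hS₂mem, hS₂max⟩ :=
    Set.Finite.exists_maximalFor id 𝒮 (Set.toFinite _) ⟨A, subset_rfl, hAU, hstable⟩
  obtain ⟨hAS, hSU, hSst⟩ := hS₂mem
  have hxS : x ∈ S₂ := hAS (Or.inl (Or.inr rfl))
  have hzS : z ∈ S₂ := hAS (Or.inl (Or.inl rfl))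
  have hzsS : ∀ i, zs i ∈ S₂ := fun i => hAS (Or.inr ⟨i, rfl⟩)
  have hnbrx : ∀ u, u ∈ D.nbr x → u ∉ S₂ := by
    intro u hu huS
    have hux : u ≠ x := by
      rintro rfl
      rcases hu with h | h <;> exact D.irrefl u h
    exact hSst u huS x hxS ((SimpleGraph.fromRel_adj D.E u x).mpr ⟨hux, Or.symm hu⟩)
  have hyS : y ∉ S₂ := hnbrx y (Or.inr hyx)
  set Cb : Set V := S₂ᶜ ∪ {x} with hCb
  have hznotC : z ∉ Cb := by
    rintro (h | h)
    · exact h hzS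
    · exact hzx h
  have hzsnotC : ∀ i, zs i ∉ Cb := by
    intro i
    rintro (h | h)
    · exact h (hzsS i)
    · exact hzsx i h
  have hGoody : y ∈ Cb ∧ 2 ≤ D.w y ∧ ∀ t, D.E y t → t ∈ Cb := by
    refine ⟨Or.inl hyS, hy, ?_⟩
    intro t het
    by_cases htx : t = x
    · exact Or.inr htx
    · left
      intro htS
      exact htx (hSU htS het)
  have hcov : ∀ u v, D.E u v → u ∈ Cb ∨ v ∈ Cb := by
    intro u v he
    by_contra hb
    push_neg at hb
    obtain ⟨hu, hv⟩ := hb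
    have huS : u ∈ S₂ := by by_contra h; exact hu (Or.inl h)
    have hvS : v ∈ S₂ := by by_contra h; exact hv (Or.inl h)
    have huv : u ≠ v := fun h => D.irrefl v (h ▸ he)
    exact hSst u huS v hvS ((SimpleGraph.fromRel_adj D.E u v).mpr ⟨huv, Or.inl he⟩)
  have hwit : ∀ c ∈ Cb, (∃ t, t ∉ Cb ∧ D.E c t) ∨
      ∃ u, D.E u c ∧ (u ∉ Cb ∨ (u ∈ Cb ∧ 2 ≤ D.w u ∧ ∀ t, D.E u t → t ∈ Cb)) := by
    intro c hc
    by_cases hcx : c = x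
    · exact Or.inr ⟨y, by rw [hcx]; exact hyx, Or.inr hGoody⟩
    · have hcS : c ∉ S₂ := by
        rcases hc with h | h
        · exact h
        · exact absurd h hcx
      by_cases hyc : D.E y c
      · exact Or.inr ⟨y, hyc, Or.inr hGoody⟩
      · have hcU : c ∈ U := fun h => absurd h hyc
        have hnb : ∃ v', v' ∈ S₂ ∧ (D.E c v' ∨ D.E v' c) := by
          by_contra hno
          push_neg at hno
          have hBmem : insert c S₂ ∈ 𝒮 := by
            refine ⟨hAS.trans (Set.subset_insert c S₂), ?_, ?_⟩
            · intro a ha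
              rcases Set.mem_insert_iff.mp ha with rfl | ha'
              · exact hcU
              · exact hSU ha'
            · intro a ha b hb hadj
              rcases Set.mem_insert_iff.mp ha with rfl | ha' <;>
                rcases Set.mem_insert_iff.mp hb with rfl | hb'
              · exact hadj.ne rfl
              · rcases ((SimpleGraph.fromRel_adj D.E a b).mp hadj).2 with h | h
                · exact (hno b hb').1 h
                · exact (hno b hb').2 h
              · rcases ((SimpleGraph.fromRel_adj D.E a b).mp hadj).2 with h | h
                · exact (hno a ha').2 h
                · exact (hno a ha').1 h
              · exact hSst a ha' b hb' hadj
          have heq := hS₂max hBmem (Set.subset_insert c S₂)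
          exact hcS (heq (Set.mem_insert c S₂))
        obtain ⟨v', hv'S, hadj⟩ := hnb
        by_cases hv'x : v' = x
        · have hcnbr : c ∈ D.nbr x := by
            rw [← hv'x]
            exact Or.symm hadj
          rw [hN] at hcnbr
          rcases Set.mem_insert_iff.mp hcnbr with rfl | hmem
          · exact Or.inr ⟨z, hzy, Or.inl hznotC⟩
          · obtain ⟨i, rfl⟩ := hmem
            rcases (hzs i).1 with h | h
            · exact Or.inl ⟨zs i, hzsnotC i, h⟩
            · exact Or.inr ⟨zs i, h, Or.inl (hzsnotC i)⟩
        · have hv'notC : v' ∉ Cb := by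
            rintro (h | h)
            · exact h hv'S
            · exact hv'x h
          rcases hadj with h | h
          · exact Or.inl ⟨v', hv'notC, h⟩
          · exact Or.inr ⟨v', h, Or.inl hv'notC⟩
  -- a minimal subcover of the complement of S₂
  have hcovS : ∀ u v, D.E u v → u ∈ S₂ᶜ ∨ v ∈ S₂ᶜ := by
    intro u v he
    by_contra hb
    push_neg at hb
    obtain ⟨hu, hv⟩ := hb
    rw [Set.notMem_compl_iff] at hu hv
    have huv : u ≠ v := fun h => D.irrefl v (h ▸ he)
    exact hSst u hu v hv ((SimpleGraph.fromRel_adj D.E u v).mpr ⟨huv, Or.inl he⟩)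
  set 𝒞 : Set (Set V) := {B : Set V | B ⊆ S₂ᶜ ∧ ∀ u v, D.E u v → u ∈ B ∨ v ∈ B} with h𝒞
  obtain ⟨B, hBmem, hBmin⟩ :=
    Set.Finite.exists_minimalFor id 𝒞 (Set.toFinite _) ⟨S₂ᶜ, subset_rfl, hcovS⟩
  obtain ⟨hBsub, hBcov⟩ := hBmem
  have hBnb : ∀ c ∈ B, ∃ t, t ∉ B ∧ (D.E c t ∨ D.E t c) := by
    intro c hcB
    by_contra hno
    push_neg at hno
    have hB' : B \ {c} ∈ 𝒞 := by
      refine ⟨Set.diff_subset.trans hBsub, ?_⟩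
      intro u v he
      have huv : u ≠ v := fun h => D.irrefl v (h ▸ he)
      rcases hBcov u v he with hu | hv
      · by_cases huc : u = c
        · subst huc
          have hvB : v ∈ B := by
            by_contra hvB
            exact (hno v hvB).1 he
          exact Or.inr ⟨hvB, fun h => huv (Set.mem_singleton_iff.mp h ▸ rfl)⟩
        · exact Or.inl ⟨hu, fun h => huc (Set.mem_singleton_iff.mp h)⟩
      · by_cases hvc : v = c
        · subst hvc
          have huB : u ∈ B := by
            by_contra huB
            exact (hno u huB).2 he
          exact Or.inl ⟨huB, fun h => huv (Set.mem_singleton_iff.mp h)⟩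
        · exact Or.inr ⟨hv, fun h => hvc (Set.mem_singleton_iff.mp h)⟩
    have heqB := hBmin hB' Set.diff_subset
    have : c ∈ B \ {c} := heqB hcB
    exact this.2 rfl
  -- the two associated primes
  have hpassoc := aux_assoc (k := k) D B hBcov (by
    intro c hc
    rcases hBnb c hc with ⟨t, htB, h | h⟩
    · exact Or.inl ⟨t, htB, h⟩
    · exact Or.inr ⟨t, h, Or.inl htB⟩)
  have hqassoc := aux_assoc (k := k) D Cb hcov hwit
  have hple : Ideal.span (MvPolynomial.X '' B) ≤
      (Ideal.span (MvPolynomial.X '' Cb) : Ideal (MvPolynomial V k)) :=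
    Ideal.span_mono (Set.image_mono (hBsub.trans Set.subset_union_left))
  have hXxq : (MvPolynomial.X x : MvPolynomial V k) ∈ Ideal.span (MvPolynomial.X '' Cb) :=
    Ideal.subset_span ⟨x, Or.inr rfl, rfl⟩
  have hXxp : (MvPolynomial.X x : MvPolynomial V k) ∉ Ideal.span (MvPolynomial.X '' B) := by
    intro h
    rw [MvPolynomial.mem_ideal_span_X_image] at h
    obtain ⟨c, hcB, hc⟩ := h (Finsupp.single x 1)
      (by rw [MvPolynomial.support_X]; exact Finset.mem_singleton_self _)
    have hcx : c = x := by
      by_contra hne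
      exact hc (Finsupp.single_eq_of_ne (fun h' => hne h'))
    exact (hBsub (hcx ▸ hcB)) hxS
  have hlt : Ideal.span (MvPolynomial.X '' B) <
      (Ideal.span (MvPolynomial.X '' Cb) : Ideal (MvPolynomial V k)) :=
    lt_of_le_of_ne hple (fun h => hXxp (h ▸ hXxq))
  have hpprime := hpassoc.1
  have hqprime := hqassoc.1
  have heq := hun _ _ (AssociatedPrimes.mem_iff.mpr hpassoc)
    (AssociatedPrimes.mem_iff.mpr hqassoc) hpprime hqprime
  have hlt' : (⟨_, hpprime⟩ : PrimeSpectrum (MvPolynomial V k)) < ⟨_, hqprime⟩ :=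
    (PrimeSpectrum.asIdeal_lt_asIdeal _ _).mp hlt
  have hfin := aux_height_lt_top (k := k) (⟨_, hpprime⟩ : PrimeSpectrum (MvPolynomial V k))
  have := Order.height_strictMono hlt' hfin
  rw [heq] at this
  exact lt_irrefl _ this
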